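/- arXiv:2209.13859 — 3 statements merged into one kernel-verified Lean document; each statement's English description precedes it below -/
import Mathlib

section
/- For every r ≥ 2 and n = r, there is a Nullstellensatz certificate of degree binom(r,2) − 1 for the infeasibility of the Ramsey system encoding R(r,2) > r: explicitly, with edges labeled 1,…,N (N = binom(r,2)), over F_2 one has 1 = Σ_{j=1}^{N} (∏_{m<j} x_{1,m})(1 + x_{1,j} + x_{2,j}) + x_{2,1} + Σ_{j=2}^{N} (∏_{m<j} x_{1,m}) x_{2,j} + ∏_{m=1}^{N} x_{1,m}. -/
open MvPolynomial Finset

noncomputable section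

/-- The coefficient polynomial `∏_{m < j} x_{1,m}`. -/
def pref (N : ℕ) (j : Fin N) : MvPolynomial (Fin 2 × Fin N) (ZMod 2) :=
  ∏ m ∈ Finset.univ.filter (fun m => m < j), X (0, m)

/-- Explicit Nullstellensatz certificate of degree `binom(r,2) - 1` that `R(r,2) ≤ r`. -/
theorem nullstellensatz_certificate_R_r_2 (r : ℕ) (hr : 2 ≤ r) :
    ((1 : MvPolynomial (Fin 2 × Fin (r.choose 2)) (ZMod 2)) =
      (∑ j : Fin (r.choose 2), pref (r.choose 2) j * (1 + X (0, j) + X (1, j))) +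
      (∑ j : Fin (r.choose 2), pref (r.choose 2) j * X (1, j)) +
      ∏ m : Fin (r.choose 2), X (0, m)) ∧
    ∀ j : Fin (r.choose 2), (pref (r.choose 2) j).totalDegree ≤ r.choose 2 - 1 := by
  set N := r.choose 2 with hNdef
  constructor
  · set G : ℕ → MvPolynomial (Fin 2 × Fin N) (ZMod 2) :=
      fun k => ∏ m ∈ Finset.univ.filter (fun m : Fin N => (m : ℕ) < k), X (0, m) with hG
    have h2 : (2 : MvPolynomial (Fin 2 × Fin N) (ZMod 2)) = 0 := by
      have h := CharP.cast_eq_zero (MvPolynomial (Fin 2 × Fin N) (ZMod 2)) 2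
      simpa using h
    have hA : ∀ j : Fin N, pref N j = G j := by
      intro j
      unfold pref
      simp only [hG]
      rfl
    have hB : ∀ j : Fin N, G (j : ℕ) * X (0, j) = G ((j : ℕ) + 1) := by
      intro j
      have hset : (Finset.univ.filter (fun m : Fin N => (m : ℕ) < (j : ℕ) + 1)) =
          insert j (Finset.univ.filter (fun m : Fin N => (m : ℕ) < (j : ℕ))) := by
        ext m
        simp [Nat.lt_succ_iff_lt_or_eq, Fin.ext_iff]
        rw [Fin.le_iff_val_le_val, Fin.lt_iff_val_lt_val]; omega
      rw [hG]
      simp only [hset]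
      rw [Finset.prod_insert (by simp)]
      ring
    have hC : G N = ∏ m : Fin N, X (0, m) := by
      rw [hG]
      congr 1
      simp [Finset.filter_true_of_mem]
    have hG0 : G 0 = 1 := by simp [hG]
    rw [← Finset.sum_add_distrib]
    have hterm : ∀ j : Fin N,
        pref N j * (1 + X (0, j) + X (1, j)) + pref N j * X (1, j)
          = G ((j : ℕ) + 1) - G (j : ℕ) := by
      intro j
      rw [hA, ← hB j]
      linear_combination (G (j : ℕ) + G (j : ℕ) * X (1, j)) * h2
    rw [Finset.sum_congr rfl (fun j _ => hterm j)]
    rw [Fin.sum_univ_eq_sum_range (fun k => G (k + 1) - G k) N]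
    rw [Finset.sum_range_sub, hG0, hC]
    linear_combination (1 - (∏ m : Fin N, X ((0 : Fin 2), m))) * h2
  · intro j
    have h1 : (pref N j).totalDegree ≤
        ∑ m ∈ Finset.univ.filter (fun m : Fin N => m < j), (X (0, m) :
          MvPolynomial (Fin 2 × Fin N) (ZMod 2)).totalDegree :=
      MvPolynomial.totalDegree_finset_prod _ _
    have h2 : ∑ m ∈ Finset.univ.filter (fun m : Fin N => m < j), (X (0, m) :
          MvPolynomial (Fin 2 × Fin N) (ZMod 2)).totalDegree
        = (Finset.univ.filter (fun m : Fin N => m < j)).card := by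
      simp [MvPolynomial.totalDegree_X]
    have hsub : (Finset.univ.filter (fun m : Fin N => m < j)) ⊆ Finset.univ.erase j := by
      intro m hm
      simp only [Finset.mem_filter, Finset.mem_univ, true_and] at hm
      exact Finset.mem_erase.mpr ⟨ne_of_lt hm, Finset.mem_univ m⟩
    have h3 : (Finset.univ.filter (fun m : Fin N => m < j)).card ≤ N - 1 := by
      calc (Finset.univ.filter (fun m : Fin N => m < j)).card
          ≤ (Finset.univ.erase j).card := Finset.card_le_card hsub
        _ = N - 1 := by rw [Finset.card_erase_of_mem (Finset.mem_univ j)]; simp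
    omega
end
end

section
/- Every 2-coloring of {1,...,9} contains a monochromatic solution to x + 3y = 3z, i.e., the 2-color Rado number of the equation x + 3y = 3z is at most 9. Moreover, the following Builder strategy shows the corresponding Builder–Painter game value is at most 5: Builder selects 4, 6, 9, 3, 7; the solutions (x,y,z) = (6,4,6), (9,6,9), (3,3,4), (3,6,7), (9,4,7) force a monochromatic solution regardless of Painter's choices. -/
open Finset

/-- A monochromatic solution to `x + 3y = 3z` over `[9]` fully colored by the partial coloring. -/
def WonRado (χ : ℕ → Option (Fin 2)) : Prop :=
  ∃ x ∈ Icc 1 9, ∃ y ∈ Icc 1 9, ∃ z ∈ Icc 1 9, x + 3 * y = 3 * z ∧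
    ∃ c : Fin 2, χ x = some c ∧ χ y = some c ∧ χ z = some c

/-- Builder (picking integers in `[9]`, Painter 2-coloring them) can force a
monochromatic solution to `x + 3y = 3z` within `t` more turns. -/
def BuilderWinsRado : (ℕ → Option (Fin 2)) → ℕ → Prop
  | χ, 0 => WonRado χ
  | χ, t + 1 => WonRado χ ∨ ∃ m ∈ Icc 1 9, χ m = none ∧
      ∀ c : Fin 2, BuilderWinsRado (Function.update χ m (some c)) t

lemma keyRado : ∀ a3 a4 a6 a7 a9 : Fin 2,
    (a4 = a6) ∨ (a6 = a9) ∨ (a3 = a4) ∨ (a3 = a6 ∧ a3 = a7) ∨ (a9 = a4 ∧ a9 = a7) := by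
  decide

theorem rado_x_plus_3y_eq_3z :
    (∀ c : ℕ → Fin 2, ∃ x ∈ Icc 1 9, ∃ y ∈ Icc 1 9, ∃ z ∈ Icc 1 9,
        x + 3 * y = 3 * z ∧ c x = c y ∧ c y = c z) ∧
    BuilderWinsRado (fun _ => none) 5 ∧
    sInf {t | BuilderWinsRado (fun _ => none) t} ≤ 5 := by
  have hwin : BuilderWinsRado (fun _ => none) 5 := by
    refine Or.inr ⟨4, by decide, rfl, fun c4 => ?_⟩
    refine Or.inr ⟨6, by decide, by simp [Function.update], fun c6 => ?_⟩
    refine Or.inr ⟨9, by decide, by simp [Function.update], fun c9 => ?_⟩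
    refine Or.inr ⟨3, by decide, by simp [Function.update], fun c3 => ?_⟩
    refine Or.inr ⟨7, by decide, by simp [Function.update], fun c7 => ?_⟩
    show WonRado _
    set χ := Function.update (Function.update (Function.update (Function.update
      (Function.update (fun _ => (none : Option (Fin 2))) 4 (some c4)) 6 (some c6))
      9 (some c9)) 3 (some c3)) 7 (some c7) with hχ
    have e3 : χ 3 = some c3 := by simp [hχ, Function.update]
    have e4 : χ 4 = some c4 := by simp [hχ, Function.update]
    have e6 : χ 6 = some c6 := by simp [hχ, Function.update]
    have e7 : χ 7 = some c7 := by simp [hχ, Function.update]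
    have e9 : χ 9 = some c9 := by simp [hχ, Function.update]
    rcases keyRado c3 c4 c6 c7 c9 with h | h | h | ⟨h1, h2⟩ | ⟨h1, h2⟩
    · exact ⟨6, by decide, 4, by decide, 6, by decide, by norm_num, c6, e6, by rw [e4, h], e6⟩
    · exact ⟨9, by decide, 6, by decide, 9, by decide, by norm_num, c6, by rw [e9, h], e6, by rw [e9, h]⟩
    · exact ⟨3, by decide, 3, by decide, 4, by decide, by norm_num, c3, e3, e3, by rw [e4, h]⟩
    · exact ⟨3, by decide, 6, by decide, 7, by decide, by norm_num, c3, e3, by rw [e6, h1], by rw [e7, h2]⟩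
    · exact ⟨9, by decide, 4, by decide, 7, by decide, by norm_num, c9, e9, by rw [e4, h1], by rw [e7, h2]⟩
  refine ⟨?_, hwin, Nat.sInf_le hwin⟩
  intro c
  rcases keyRado (c 3) (c 4) (c 6) (c 7) (c 9) with h | h | h | ⟨h1, h2⟩ | ⟨h1, h2⟩
  · exact ⟨6, by decide, 4, by decide, 6, by decide, by norm_num, h.symm, h⟩
  · exact ⟨9, by decide, 6, by decide, 9, by decide, by norm_num, h.symm, h⟩
  · exact ⟨3, by decide, 3, by decide, 4, by decide, by norm_num, rfl, h⟩
  · exact ⟨3, by decide, 6, by decide, 7, by decide, by norm_num, h1, h1.symm.trans h2⟩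
  · exact ⟨9, by decide, 4, by decide, 7, by decide, by norm_num, h1, h1.symm.trans h2⟩
end

section
/- (Combinatorial Nullstellensatz) Let F be a field and f ∈ F[x_1,...,x_n] of total degree t_1 + ... + t_n with nonzero coefficient on the monomial x_1^{t_1}···x_n^{t_n}. If S_1,...,S_n ⊆ F satisfy |S_i| > t_i, then there exist s_i ∈ S_i with f(s_1,...,s_n) ≠ 0. -/
open MvPolynomial Finset

variable {F : Type} [Field F] {n : ℕ}

/-- Division of a multivariate polynomial by `X i - C a`, with degree control on the
quotient and the remainder not involving `X i`. -/
private lemma CN.div_lemma (i : Fin n) (a : F) (f : MvPolynomial (Fin n) F) :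
    ∃ g r : MvPolynomial (Fin n) F, f = (X i - C a) * g + r ∧ degreeOf i r = 0 ∧
      g.totalDegree + 1 ≤ max f.totalDegree 1 := by
  classical
  set q : ℕ → MvPolynomial (Fin n) F :=
    fun k => ∑ j ∈ Finset.range k, X i ^ j * C (a ^ (k - 1 - j)) with hqdef
  have hq : ∀ k, (X i - C a) * q k = X i ^ k - C (a ^ k) := by
    intro k
    rw [mul_comm]
    simp only [hqdef, C_pow]
    exact geom_sum₂_mul _ _ k
  have hqdeg : ∀ k, (q k).totalDegree ≤ k - 1 := by
    intro k
    apply totalDegree_finsetSum_le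
    intro j hj
    calc (X i ^ j * C (a ^ (k - 1 - j)) : MvPolynomial (Fin n) F).totalDegree
        ≤ (X i ^ j : MvPolynomial (Fin n) F).totalDegree +
          (C (a ^ (k - 1 - j)) : MvPolynomial (Fin n) F).totalDegree := totalDegree_mul _ _
      _ ≤ j + 0 := by
          gcongr
          · exact (totalDegree_pow _ _).trans (by simp)
          · exact (totalDegree_C _).le
      _ ≤ k - 1 := by
          have := Finset.mem_range.mp hj; omega
  refine ⟨∑ d ∈ f.support, monomial (d - Finsupp.single i (d i)) (coeff d f) * q (d i),
    ∑ d ∈ f.support, monomial (d - Finsupp.single i (d i)) (coeff d f * a ^ (d i)), ?_, ?_, ?_⟩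
  · -- the division identity
    conv_lhs => rw [as_sum f]
    rw [Finset.mul_sum, ← Finset.sum_add_distrib]
    apply Finset.sum_congr rfl
    intro d _
    set d' : Fin n →₀ ℕ := d - Finsupp.single i (d i) with hd'
    have hdd : d = d' + Finsupp.single i (d i) := by
      ext j
      by_cases hji : j = i
      · subst hji; simp [hd', Finsupp.single_apply]
      · simp [hd', Finsupp.single_apply, Ne.symm hji]
    calc monomial d (coeff d f)
        = monomial d' (coeff d f) * X i ^ (d i) := by
          rw [X_pow_eq_monomial, monomial_mul, mul_one, ← hdd]
      _ = monomial d' (coeff d f) * ((X i - C a) * q (d i) + C (a ^ (d i))) := by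
          rw [hq]; ring_nf
      _ = (X i - C a) * (monomial d' (coeff d f) * q (d i)) +
            monomial d' (coeff d f * a ^ (d i)) := by
          rw [mul_add]
          congr 1
          · ring
          · rw [mul_comm, C_mul_monomial, mul_comm]
  · -- remainder does not involve X i
    rw [← Nat.lt_one_iff, degreeOf_lt_iff Nat.one_pos]
    intro m hm
    have := support_sum hm
    obtain ⟨d, _, hd⟩ := Finset.mem_biUnion.mp this
    have := support_monomial_subset hd
    have hmd : m = d - Finsupp.single i (d i) := Finset.mem_singleton.mp this
    have : m i = 0 := by simp [hmd]
    omega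
  · -- degree bound on quotient
    have h1 : (1 : ℕ) ≤ max f.totalDegree 1 := le_max_right _ _
    have : (∑ d ∈ f.support, monomial (d - Finsupp.single i (d i)) (coeff d f) *
        q (d i)).totalDegree ≤ max f.totalDegree 1 - 1 := by
      apply totalDegree_finsetSum_le
      intro d hd
      by_cases hk : d i = 0
      · have : q (d i) = 0 := by simp [hqdef, hk]
        simp [this]
      · set d' : Fin n →₀ ℕ := d - Finsupp.single i (d i) with hd'
        have hdd : d = d' + Finsupp.single i (d i) := by
          ext j
          by_cases hji : j = i
          · subst hji; simp [hd', Finsupp.single_apply]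
          · simp [hd', Finsupp.single_apply, Ne.symm hji]
        have hsum : (d.sum fun _ e => e) = (d'.sum fun _ e => e) + d i := by
          conv_lhs => rw [hdd]
          rw [Finsupp.sum_add_index' (fun _ => rfl) (fun _ _ _ => rfl),
            Finsupp.sum_single_index rfl]
        have hle : (d.sum fun _ e => e) ≤ f.totalDegree := le_totalDegree hd
        calc (monomial d' (coeff d f) * q (d i)).totalDegree
            ≤ (monomial d' (coeff d f)).totalDegree + (q (d i)).totalDegree :=
              totalDegree_mul _ _
          _ ≤ (d'.sum fun _ e => e) + (d i - 1) := by
              gcongr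
              · exact totalDegree_monomial_le _ _
              · exact hqdeg _
          _ ≤ max f.totalDegree 1 - 1 := by
              have : f.totalDegree ≤ max f.totalDegree 1 := le_max_left _ _
              omega
    omega

/-- Evaluation of a polynomial not involving `X i` does not depend on the `i`-th coordinate. -/
private lemma CN.eval_update (i : Fin n) (r : MvPolynomial (Fin n) F)
    (hr : degreeOf i r = 0) (s : Fin n → F) (a : F) :
    eval (Function.update s i a) r = eval s r := by
  classical
  rw [eval_eq', eval_eq']
  apply Finset.sum_congr rfl
  intro d hd
  have hdi : d i = 0 := by
    have := monomial_le_degreeOf i hd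
    omega
  congr 1
  apply Finset.prod_congr rfl
  intro j _
  by_cases hji : j = i
  · subst hji; simp [hdi]
  · simp [Function.update_of_ne hji]

private lemma CN.key : ∀ (m : ℕ) (t : Fin n → ℕ) (S : Fin n → Finset F)
    (f : MvPolynomial (Fin n) F),
    (∑ i, t i) ≤ m → f.totalDegree ≤ ∑ i, t i → (∀ i, t i < (S i).card) →
    (∀ s : Fin n → F, (∀ i, s i ∈ S i) → eval s f = 0) →
    f.coeff (Finsupp.equivFunOnFinite.symm t) = 0 := by
  classical
  intro m
  induction m with
  | zero =>
    intro t S f hsum hdeg hS hvan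
    have ht : ∀ i, t i = 0 := by
      intro i
      have := Finset.single_le_sum (f := t) (fun j _ => Nat.zero_le _) (mem_univ i)
      omega
    have htt : Finsupp.equivFunOnFinite.symm t = 0 := by
      ext j; simp [ht j]
    -- pick a point of the grid
    have hne : ∀ i, (S i).Nonempty := fun i => Finset.card_pos.mp (lt_of_le_of_lt (Nat.zero_le _) (hS i))
    set s : Fin n → F := fun i => (hne i).choose with hs
    have hsmem : ∀ i, s i ∈ S i := fun i => (hne i).choose_spec
    have hf0 : eval s f = 0 := hvan s hsmem
    -- f has total degree 0, hence is constant
    have hdeg0 : f.totalDegree = 0 := by omega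
    rw [htt]
    rw [eval_eq'] at hf0
    have hsup : ∀ d ∈ f.support, d = 0 := by
      intro d hd
      ext j
      exact (totalDegree_eq_zero_iff _ f).mp hdeg0 d hd j
    by_cases h0 : (0 : Fin n →₀ ℕ) ∈ f.support
    · have : f.support = {0} := by
        apply Finset.eq_singleton_iff_unique_mem.mpr
        exact ⟨h0, fun d hd => hsup d hd⟩
      rw [this] at hf0
      simpa using hf0
    · exact notMem_support_iff.mp h0
  | succ m ih =>
    intro t S f hsum hdeg hS hvan
    by_cases hm : (∑ i, t i) ≤ m
    · exact ih t S f hm hdeg hS hvan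
    have hsum' : (∑ i, t i) = m + 1 := by omega
    -- find i with t i ≥ 1
    have : ∃ i, t i ≠ 0 := by
      by_contra h
      push_neg at h
      simp [h] at hsum'
    obtain ⟨i, hti⟩ := this
    have hane : (S i).Nonempty := Finset.card_pos.mp (lt_of_le_of_lt (Nat.zero_le _) (hS i))
    obtain ⟨a, ha⟩ := hane
    obtain ⟨g, r, hf, hr, hgdeg⟩ := CN.div_lemma i a f
    have hgdeg' : g.totalDegree ≤ m := by
      have : max f.totalDegree 1 ≤ m + 1 := by
        have := le_max_left f.totalDegree 1
        have h2 : f.totalDegree ≤ m + 1 := by omega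
        omega
      omega
    set t' : Fin n → ℕ := Function.update t i (t i - 1) with ht'
    set S' : Fin n → Finset F := Function.update S i ((S i).erase a) with hS'
    have hsumt' : (∑ j, t' j) = m := by
      have e1 : (∑ j, t' j) = (t i - 1) + ∑ j ∈ univ \ {i}, t j := by
        rw [ht', Finset.sum_update_of_mem (mem_univ i)]
      have e2 : (∑ j, t j) = t i + ∑ j ∈ univ \ {i}, t j := by
        conv_lhs => rw [← Function.update_eq_self i t]
        rw [Finset.sum_update_of_mem (mem_univ i)]
      omega
    have hcard' : ∀ j, t' j < (S' j).card := by
      intro j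
      by_cases hji : j = i
      · subst hji
        rw [ht', hS']
        simp only [Function.update_self]
        rw [Finset.card_erase_of_mem ha]
        have := hS j
        omega
      · rw [ht', hS']
        simp only [Function.update_of_ne hji]
        exact hS j
    have hvg : ∀ s : Fin n → F, (∀ j, s j ∈ S' j) → eval s g = 0 := by
      intro s hs
      have hsi : s i ∈ (S i).erase a := by
        have := hs i
        rwa [hS', Function.update_self] at this
      have hsia : s i ≠ a := (Finset.mem_erase.mp hsi).1
      have hsiS : s i ∈ S i := (Finset.mem_erase.mp hsi).2
      have hs2 : ∀ j, s j ∈ S j := by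
        intro j
        by_cases hji : j = i
        · subst hji; exact hsiS
        · have := hs j
          rwa [hS', Function.update_of_ne hji] at this
      have h1 : eval s f = 0 := hvan s hs2
      have h2 : eval (Function.update s i a) f = 0 := by
        apply hvan
        intro j
        by_cases hji : j = i
        · subst hji; simp [ha]
        · simp [Function.update_of_ne hji, hs2 j]
      -- evaluate the division identity at the updated point
      have h3 : eval s r = 0 := by
        have := congrArg (eval (Function.update s i a)) hf
        rw [h2] at this
        simp only [map_add, map_mul, map_sub, eval_X, eval_C, Function.update_self,
          sub_self, zero_mul] at this
        rw [CN.eval_update i r hr s a] at this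
        simpa using this.symm
      have h4 : (s i - a) * eval s g = 0 := by
        have := congrArg (eval s) hf
        rw [h1] at this
        simp only [map_add, map_mul, map_sub, eval_X, eval_C, h3, add_zero] at this
        exact this.symm
      rcases mul_eq_zero.mp h4 with h | h
      · exact absurd (sub_eq_zero.mp h) hsia
      · exact h
    have hg0 : g.coeff (Finsupp.equivFunOnFinite.symm t') = 0 := by
      apply ih t' S' g hsumt'.le (by rw [hsumt']; exact hgdeg') hcard' hvg
    -- now compute the coefficient of t in f
    set tt : Fin n →₀ ℕ := Finsupp.equivFunOnFinite.symm t with htt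
    set tt' : Fin n →₀ ℕ := Finsupp.equivFunOnFinite.symm t' with htt'
    have hsplit : tt = Finsupp.single i 1 + tt' := by
      ext j
      rw [htt, htt', Finsupp.add_apply]
      show t j = Finsupp.single i 1 j + t' j
      rw [ht']
      by_cases hji : j = i
      · subst hji
        rw [Function.update_self, Finsupp.single_eq_same]
        omega
      · rw [Function.update_of_ne hji, Finsupp.single_eq_of_ne' (Ne.symm hji), zero_add]
    have hcr : coeff tt r = 0 := by
      apply notMem_support_iff.mp
      intro hmem
      have := monomial_le_degreeOf i hmem
      rw [hr] at this
      have : tt i = 0 := by omega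
      simp only [htt, Finsupp.equivFunOnFinite_symm_apply_apply] at this
      omega
    have hcg : coeff tt g = 0 := by
      apply coeff_eq_zero_of_totalDegree_lt
      have : (∑ j ∈ tt.support, tt j) = ∑ j, t j := by
        rw [Finset.sum_subset (Finset.subset_univ tt.support)]
        · rfl
        · intro x _ hx
          simpa [htt] using Finsupp.notMem_support_iff.mp hx
      omega
    rw [hf, coeff_add, hcr, add_zero, sub_mul, coeff_sub, hsplit, coeff_X_mul]
    rw [← hsplit]
    have hCg : coeff tt (C a * g) = a * coeff tt g := coeff_C_mul _ _ _
    rw [hCg, hcg, mul_zero, sub_zero]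
    exact hg0

theorem combinatorial_nullstellensatz (F : Type) [Field F] (n : ℕ)
    (f : MvPolynomial (Fin n) F) (t : Fin n → ℕ)
    (hdeg : f.totalDegree = ∑ i, t i)
    (hcoef : f.coeff (Finsupp.equivFunOnFinite.symm t) ≠ 0)
    (S : Fin n → Finset F) (hS : ∀ i, t i < (S i).card) :
    ∃ s : Fin n → F, (∀ i, s i ∈ S i) ∧ eval s f ≠ 0 := by
  by_contra h
  push_neg at h
  have hvan : ∀ s : Fin n → F, (∀ i, s i ∈ S i) → eval s f = 0 := fun s hs => h s hs
  exact hcoef (CN.key (∑ i, t i) t S f le_rfl hdeg.le hS hvan)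
end
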